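/- Let U ⊆ ℝ^n be open, let I ⊆ {1,…,n} be nonempty, suppose C = {x ∈ U : x_j = 0 for all j ∈ I} is nonempty, let i ∈ I, let π_i = π_{I,i} be the i-th standard blowup chart and U_i = π_i^{-1}(U). If f : U → ℝ is real-analytic, then inf{ord(f∘π_i; y) : y ∈ U_i, y_i = 0} = inf{ord(f;x) : x ∈ C}, as elements of ℕ ∪ {∞}. -/

import Mathlib

/-- Partial derivative in the `i`-th coordinate. -/
noncomputable def pd {n : ℕ} (i : Fin n) (f : (Fin n → ℝ) → ℝ) : (Fin n → ℝ) → ℝ :=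
  fun x => fderiv ℝ f x (Pi.single i 1)

/-- Iterated partial derivative `∂^α` for a multi-index `α : Fin n → ℕ`. -/
noncomputable def md {n : ℕ} (α : Fin n → ℕ) (f : (Fin n → ℝ) → ℝ) : (Fin n → ℝ) → ℝ :=
  (List.finRange n).foldr (fun i g => (pd i)^[α i] g) f

/-- The order of `f` at `a`: `ord(f;a) = inf{|α| : ∂^α f(a) ≠ 0} ∈ ℕ ∪ {∞}`. -/
noncomputable def ordAt {n : ℕ} (f : (Fin n → ℝ) → ℝ) (a : Fin n → ℝ) : ℕ∞ :=
  sInf {k : ℕ∞ | ∃ α : Fin n → ℕ, md α f a ≠ 0 ∧ ((∑ j, α j : ℕ) : ℕ∞) = k}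

/-- The `i`-th standard chart of the blowing-up of `ℝⁿ` with center `{x : x_I = 0}`. -/
def blowChart {n : ℕ} (I : Finset (Fin n)) (i : Fin n) (y : Fin n → ℝ) : Fin n → ℝ :=
  fun j => if j ∈ I ∧ j ≠ i then y i * y j else y j

open Filter Asymptotics Set List Topology

namespace S6

variable {n : ℕ}

abbrev E (n : ℕ) := (Fin n → ℝ)

noncomputable def ev (j : Fin n) : E n := Pi.single j 1

noncomputable def Dl (vs : List (E n)) (f : E n → ℝ) : E n → ℝ :=
  vs.foldr (fun v g x => fderiv ℝ g x v) f

@[simp] lemma Dl_nil (f : E n → ℝ) : Dl [] f = f := rfl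

lemma Dl_cons (v : E n) (vs : List (E n)) (f : E n → ℝ) :
    Dl (v :: vs) f = fun x => fderiv ℝ (Dl vs f) x v := rfl

lemma Dl_append (l₁ l₂ : List (E n)) (f : E n → ℝ) :
    Dl (l₁ ++ l₂) f = Dl l₁ (Dl l₂ f) := by
  simp [Dl, List.foldr_append]

/-- multi-index to index list -/
def mil (α : Fin n → ℕ) : List (Fin n) :=
  (List.finRange n).flatMap fun j => List.replicate (α j) j

lemma pd_iter_eq_Dl (i : Fin n) (k : ℕ) (f : E n → ℝ) :
    (pd i)^[k] f = Dl (List.replicate k (Pi.single i 1)) f := by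
  induction k with
  | zero => rfl
  | succ k ih => rw [Function.iterate_succ_apply', ih, List.replicate_succ]; rfl

lemma md_eq_Dl (α : Fin n → ℕ) (f : E n → ℝ) :
    md α f = Dl ((mil α).map ev) f := by
  show (List.finRange n).foldr (fun i g => (pd i)^[α i] g) f = _
  rw [mil]
  induction (List.finRange n) with
  | nil => rfl
  | cons j l ih =>
      rw [List.foldr_cons, ih, List.flatMap_cons, List.map_append, Dl_append,
        List.map_replicate, pd_iter_eq_Dl]
      rfl

lemma count_flat_aux (α : Fin n → ℕ) (j : Fin n) (l : List (Fin n)) (h1 : l.Nodup) :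
    (l.flatMap fun i => List.replicate (α i) i).count j = if j ∈ l then α j else 0 := by
  induction l with
  | nil => simp
  | cons a l ih =>
      rw [List.flatMap_cons, List.count_append, List.count_replicate,
        ih (List.nodup_cons.1 h1).2]
      by_cases h : a = j
      · subst h
        have : a ∉ l := (List.nodup_cons.1 h1).1
        simp [this]
      · simp [h, Ne.symm h, List.mem_cons]

lemma count_mil (α : Fin n → ℕ) (j : Fin n) : (mil α).count j = α j := by
  rw [mil, count_flat_aux α j _ (List.nodup_finRange n)]
  simp [List.mem_finRange]

lemma length_mil (α : Fin n → ℕ) : (mil α).length = ∑ j, α j := by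
  rw [mil, List.length_flatMap, Fin.sum_univ_def]
  congr 1
  simp [Function.comp]

/-- counts of a function tuple -/
def cnt {k : ℕ} (φ : Fin k → Fin n) : Fin n → ℕ := fun j => ∑ s, if φ s = j then 1 else 0

lemma count_ofFn (k : ℕ) (φ : Fin k → Fin n) (j : Fin n) :
    (List.ofFn φ).count j = cnt φ j := by
  induction k with
  | zero => simp [cnt]
  | succ k ih =>
      rw [List.ofFn_succ, List.count_cons, cnt, Fin.sum_univ_succ,
        ih (φ := fun i => φ i.succ)]
      rw [add_comm]
      congr 1
      simp [beq_iff_eq]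

lemma sum_cnt (k : ℕ) (φ : Fin k → Fin n) : ∑ j, cnt φ j = k := by
  unfold cnt
  rw [Finset.sum_comm]
  simp

variable {V : Set (E n)} {f : E n → ℝ}

lemma Dl_congr (hV : IsOpen V) {f g : E n → ℝ} (h : Set.EqOn f g V) (vs : List (E n)) :
    Set.EqOn (Dl vs f) (Dl vs g) V := by
  induction vs with
  | nil => exact h
  | cons v vs ih =>
      intro x hx
      have h2 : Dl vs f =ᶠ[𝓝 x] Dl vs g := eventually_of_mem (hV.mem_nhds hx) ih
      simp only [Dl_cons, h2.fderiv_eq]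

lemma Dl_eq_iteratedFDeriv (hV : IsOpen V) (hf : ∀ x ∈ V, AnalyticAt ℝ f x)
    (vs : List (E n)) :
    ∀ x ∈ V, Dl vs f x = iteratedFDeriv ℝ vs.length f x (fun s => vs.get s) := by
  induction vs with
  | nil => intro x hx; simp [Dl]
  | cons v vs ih =>
      intro x hx
      have hdiff : DifferentiableAt ℝ (iteratedFDeriv ℝ vs.length f) x :=
        (((hf x hx).contDiffAt (n := ⊤)).iteratedFDeriv_right le_top).differentiableAt (by simp : (1 : WithTop ℕ∞) ≠ 0)
      have heq : Dl vs f =ᶠ[𝓝 x]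
          fun y => iteratedFDeriv ℝ vs.length f y (fun s => vs.get s) :=
        eventually_of_mem (hV.mem_nhds hx) ih
      have h3 := (hdiff.hasFDerivAt.continuousMultilinear_apply_const
        (fun s => vs.get s)).fderiv
      have : Dl (v :: vs) f x
          = (fderiv ℝ (iteratedFDeriv ℝ vs.length f) x v) (fun s => vs.get s) := by
        rw [Dl_cons]
        dsimp only
        rw [heq.fderiv_eq, h3]
        rfl
      rw [this]
      show ((fderiv ℝ (iteratedFDeriv ℝ vs.length f) x) v) (fun s => vs.get s)
          = iteratedFDeriv ℝ (vs.length + 1) f x (fun s => (v::vs).get s)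
      rw [iteratedFDeriv_succ_apply_left]
      rfl

lemma Dl_contDiffAt (hV : IsOpen V) (hf : ∀ x ∈ V, AnalyticAt ℝ f x) (vs : List (E n))
    {x : E n} (hx : x ∈ V) :
    ContDiffAt ℝ (⊤ : WithTop ℕ∞) (Dl vs f) x := by
  have hsm : ContDiffAt ℝ (⊤ : WithTop ℕ∞)
      (fun y => iteratedFDeriv ℝ vs.length f y (fun s => vs.get s)) x := by
    exact ((ContinuousMultilinearMap.apply ℝ (fun _ : Fin vs.length => E n) ℝ
      (fun s => vs.get s)).contDiff.contDiffAt).comp x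
      (((hf x hx).contDiffAt (n := ⊤)).iteratedFDeriv_right le_top)
  exact hsm.congr_of_eventuallyEq
    (eventually_of_mem (hV.mem_nhds hx) (Dl_eq_iteratedFDeriv hV hf vs))

lemma Dl_swap (hV : IsOpen V) (hf : ∀ x ∈ V, AnalyticAt ℝ f x) (v w : E n) (vs : List (E n)) :
    Set.EqOn (Dl (v :: w :: vs) f) (Dl (w :: v :: vs) f) V := by
  intro x hx
  set h := Dl vs f with hh
  have hsm : ContDiffAt ℝ (⊤ : WithTop ℕ∞) h x := Dl_contDiffAt hV hf vs hx
  have hdf : DifferentiableAt ℝ (fderiv ℝ h) x :=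
    (hsm.fderiv_right le_top).differentiableAt (by simp : (1 : WithTop ℕ∞) ≠ 0)
  have key : ∀ u z : E n, Dl (u :: z :: vs) f x = fderiv ℝ (fderiv ℝ h) x u z := by
    intro u z
    have hc : fderiv ℝ (fun y => (fderiv ℝ h y) z) x
        = (fderiv ℝ (fderiv ℝ h) x).flip z := by
      have h2 := fderiv_clm_apply hdf (differentiableAt_const z)
      simpa using h2
    show fderiv ℝ (fun y => fderiv ℝ h y z) x u = _
    rw [hc]
    rfl
  rw [key v w, key w v]
  exact (hsm.isSymmSndFDerivAt le_top) v w

lemma Dl_perm (hV : IsOpen V) (hf : ∀ x ∈ V, AnalyticAt ℝ f x) {l₁ l₂ : List (E n)}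
    (hp : l₁.Perm l₂) : Set.EqOn (Dl l₁ f) (Dl l₂ f) V := by
  induction hp with
  | nil => exact fun x _ => rfl
  | cons v _ ih =>
      intro x hx
      have h2 : Dl _ f =ᶠ[𝓝 x] Dl _ f := eventually_of_mem (hV.mem_nhds hx) ih
      simp only [Dl_cons, h2.fderiv_eq]
  | swap v w l => exact Dl_swap hV hf w v l
  | trans _ _ ih₁ ih₂ => exact fun x hx => (ih₁ hx).trans (ih₂ hx)

lemma line_cont (b v : E n) : Continuous (fun t : ℝ => b + t • v) := by
  continuity

lemma iteratedDeriv_line (hV : IsOpen V) (hf : ∀ x ∈ V, AnalyticAt ℝ f x)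
    (b v : E n) (k : ℕ) :
    ∀ s : ℝ, b + s • v ∈ V →
      iteratedDeriv k (fun t : ℝ => f (b + t • v)) s
        = Dl (List.replicate k v) f (b + s • v) := by
  induction k with
  | zero => intro s hs; simp [iteratedDeriv_zero, Dl]
  | succ k ih =>
      intro s hs
      rw [iteratedDeriv_succ]
      have hmem : {t : ℝ | b + t • v ∈ V} ∈ 𝓝 s :=
        (hV.preimage (line_cont b v)).mem_nhds hs
      have heq : iteratedDeriv k (fun t : ℝ => f (b + t • v))
          =ᶠ[𝓝 s] fun t => Dl (List.replicate k v) f (b + t • v) :=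
        eventually_of_mem hmem (fun t ht => ih t ht)
      rw [heq.deriv_eq]
      have hline : HasDerivAt (fun t : ℝ => b + t • v) v s := by
        simpa using ((hasDerivAt_id s).smul_const v).const_add b
      have hd : DifferentiableAt ℝ (Dl (List.replicate k v) f) (b + s • v) :=
        (Dl_contDiffAt hV hf _ hs).differentiableAt (by simp : (⊤ : WithTop ℕ∞) ≠ 0)
      have hcomp : HasDerivAt (fun t => Dl (replicate k v) f (b + t • v))
          ((fderiv ℝ (Dl (replicate k v) f) (b + s • v)) v) s :=
        (hd.hasFDerivAt.comp_hasDerivAt s hline)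
      rw [hcomp.deriv]
      rw [List.replicate_succ]
      rfl

lemma Dl_ofFn (hV : IsOpen V) (hf : ∀ x ∈ V, AnalyticAt ℝ f x) :
    ∀ (k : ℕ) (u : Fin k → E n), ∀ x ∈ V,
      Dl (List.ofFn u) f x = iteratedFDeriv ℝ k f x u := by
  intro k
  induction k with
  | zero => intro u x hx; simp [Dl]
  | succ k ih =>
      intro u x hx
      rw [List.ofFn_succ]
      have hdiff : DifferentiableAt ℝ (iteratedFDeriv ℝ k f) x :=
        (((hf x hx).contDiffAt (n := ⊤)).iteratedFDeriv_right le_top).differentiableAt (by simp : (1 : WithTop ℕ∞) ≠ 0)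
      have heq : Dl (List.ofFn fun s => u s.succ) f =ᶠ[𝓝 x]
          fun y => iteratedFDeriv ℝ k f y (fun s => u s.succ) :=
        eventually_of_mem (hV.mem_nhds hx) (fun y hy => ih (fun s => u s.succ) y hy)
      have h3 := (hdiff.hasFDerivAt.continuousMultilinear_apply_const
        (fun s => u s.succ)).fderiv
      have h4 : Dl (u 0 :: List.ofFn fun s => u s.succ) f x
          = (fderiv ℝ (iteratedFDeriv ℝ k f) x (u 0)) (fun s => u s.succ) := by
        rw [Dl_cons]
        dsimp only
        rw [heq.fderiv_eq, h3]
        rfl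
      rw [h4, iteratedFDeriv_succ_apply_left]
      rfl

lemma T_basis_eq_md (hV : IsOpen V) (hf : ∀ x ∈ V, AnalyticAt ℝ f x) {a : E n} (ha : a ∈ V)
    (k : ℕ) (φ : Fin k → Fin n) :
    iteratedFDeriv ℝ k f a (fun s => ev (φ s)) = md (cnt φ) f a := by
  rw [← Dl_ofFn hV hf k (fun s => ev (φ s)) a ha, md_eq_Dl]
  have h1 : List.ofFn (fun s => ev (φ s)) = (List.ofFn φ).map ev := by
    rw [List.map_ofFn]; rfl
  rw [h1]
  have hp : (List.ofFn φ).Perm (mil (cnt φ)) := by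
    rw [List.perm_iff_count]
    intro j
    rw [count_ofFn, count_mil]
  exact Dl_perm hV hf (hp.map ev) ha

lemma single_eq_smul_ev (j : Fin n) (c : ℝ) : c • ev j = Pi.single j c := by
  unfold ev
  rw [← Pi.single_smul]
  simp

lemma diag_expand (hV : IsOpen V) (hf : ∀ x ∈ V, AnalyticAt ℝ f x) {a : E n} (ha : a ∈ V)
    (k : ℕ) (w : E n) :
    iteratedFDeriv ℝ k f a (fun _ => w)
      = ∑ φ : Fin k → Fin n, (∏ s, w (φ s)) • md (cnt φ) f a := by
  classical
  have hw1 : w = ∑ j, (w j) • ev j := by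
    rw [Finset.sum_congr rfl (fun j _ => single_eq_smul_ev j (w j))]
    exact (Finset.univ_sum_single w).symm
  calc iteratedFDeriv ℝ k f a (fun _ => w)
      = iteratedFDeriv ℝ k f a (fun _ : Fin k => ∑ j ∈ Finset.univ, (w j) • ev j) := by
        rw [← hw1]
    _ = ∑ φ ∈ Fintype.piFinset (fun _ : Fin k => (Finset.univ : Finset (Fin n))),
          iteratedFDeriv ℝ k f a (fun s => (w (φ s)) • ev (φ s)) :=
        (iteratedFDeriv ℝ k f a).map_sum_finset _ _
    _ = ∑ φ : Fin k → Fin n, (∏ s, w (φ s)) • md (cnt φ) f a := by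
        rw [Fintype.piFinset_univ]
        refine Finset.sum_congr rfl fun φ _ => ?_
        rw [(iteratedFDeriv ℝ k f a).map_smul_univ, T_basis_eq_md hV hf ha k φ]

lemma diag_zero_of_md (hV : IsOpen V) (hf : ∀ x ∈ V, AnalyticAt ℝ f x) {a : E n} (ha : a ∈ V)
    (k : ℕ) (h0 : ∀ α : Fin n → ℕ, (∑ j, α j) = k → md α f a = 0) (w : E n) :
    iteratedFDeriv ℝ k f a (fun _ => w) = 0 := by
  rw [diag_expand hV hf ha k w]
  refine Finset.sum_eq_zero fun φ _ => ?_
  rw [h0 _ (sum_cnt k φ), smul_zero]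

lemma md_zero_of_diag (hV : IsOpen V) (hf : ∀ x ∈ V, AnalyticAt ℝ f x) {a : E n} (ha : a ∈ V)
    (k : ℕ) (h0 : ∀ w : E n, iteratedFDeriv ℝ k f a (fun _ => w) = 0) :
    ∀ α : Fin n → ℕ, (∑ j, α j) = k → md α f a = 0 := by
  intro α hα
  classical
  set P : MvPolynomial (Fin n) ℝ :=
    ∑ φ : Fin k → Fin n,
      MvPolynomial.monomial (∑ s, Finsupp.single (φ s) 1) (md (cnt φ) f a) with hP
  have hev : ∀ t : E n, MvPolynomial.eval t P = 0 := by
    intro t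
    rw [hP, map_sum]
    have h1 : ∀ φ : Fin k → Fin n,
        MvPolynomial.eval t (MvPolynomial.monomial (∑ s, Finsupp.single (φ s) 1)
          (md (cnt φ) f a)) = (∏ s, t (φ s)) • md (cnt φ) f a := by
      intro φ
      rw [MvPolynomial.eval_monomial, smul_eq_mul, mul_comm]
      congr 1
      rw [← Finsupp.prod_finset_sum_index (fun j => by simp) (fun j e1 e2 => pow_add _ _ _)]
      refine Finset.prod_congr rfl fun s _ => ?_
      rw [Finsupp.prod_single_index (by simp)]
      exact pow_one _
    rw [Finset.sum_congr rfl (fun φ _ => h1 φ), ← diag_expand hV hf ha k t, h0 t]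
  have hPz : P = 0 := by
    apply MvPolynomial.funext
    intro x
    rw [hev x, map_zero]
  have hβ : ∀ φ : Fin k → Fin n,
      ((∑ s, Finsupp.single (φ s) 1) = Finsupp.equivFunOnFinite.symm α) ↔ cnt φ = α := by
    intro φ
    constructor
    · intro h
      funext j
      have := congrFun (congrArg (fun g : Fin n →₀ ℕ => (g : Fin n → ℕ)) h) j
      simpa [Finsupp.single_apply, cnt] using this
    · intro h
      ext j
      simp [Finsupp.single_apply, ← h, cnt]
  have hc : MvPolynomial.coeff (Finsupp.equivFunOnFinite.symm α) P = 0 := by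
    rw [hPz, MvPolynomial.coeff_zero]
  rw [hP, MvPolynomial.coeff_sum] at hc
  have h2 : ∀ φ : Fin k → Fin n,
      MvPolynomial.coeff (Finsupp.equivFunOnFinite.symm α)
        (MvPolynomial.monomial (∑ s, Finsupp.single (φ s) 1) (md (cnt φ) f a))
      = if cnt φ = α then md α f a else 0 := by
    intro φ
    rw [MvPolynomial.coeff_monomial]
    by_cases h : cnt φ = α
    · rw [if_pos ((hβ φ).2 h), if_pos h, h]
    · rw [if_neg (fun hh => h ((hβ φ).1 hh)), if_neg h]
  rw [Finset.sum_congr rfl (fun φ _ => h2 φ), ← Finset.sum_filter,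
    Finset.sum_const, nsmul_eq_mul] at hc
  have hcard : (Finset.univ.filter (fun φ : Fin k → Fin n => cnt φ = α)).card ≠ 0 := by
    subst hα
    rw [Finset.card_ne_zero, Finset.filter_nonempty_iff]
    refine ⟨fun s => (mil α).get (Fin.cast (length_mil α).symm s), Finset.mem_univ _, ?_⟩
    funext j
    have e1 : cnt (fun s => (mil α).get (Fin.cast (length_mil α).symm s)) j
        = cnt (fun s => (mil α).get s) j := by
      unfold cnt
      exact Fintype.sum_equiv (finCongr (length_mil α).symm) _ _ (fun s => rfl)
    rw [e1, ← count_ofFn, List.ofFn_get, count_mil]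
  have : (((Finset.univ.filter (fun φ : Fin k → Fin n => cnt φ = α)).card : ℝ)) ≠ 0 := by
    exact_mod_cast hcard
  exact (mul_eq_zero.1 hc).resolve_left this

lemma pow_bigO (k m : ℕ) (hk : k ≤ m) :
    (fun y : E n => ‖y‖ ^ (m+1)) =O[𝓝 0] (fun y : E n => ‖y‖ ^ (k+1)) := by
  rw [isBigO_iff]
  refine ⟨1, ?_⟩
  have h1 : ∀ᶠ y in 𝓝 (0 : E n), ‖y‖ ≤ 1 := by
    filter_upwards [Metric.ball_mem_nhds (0 : E n) one_pos] with y hy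
    rw [Metric.mem_ball, dist_zero_right] at hy
    exact hy.le
  filter_upwards [h1] with y hy
  rw [norm_pow, norm_pow, norm_norm, one_mul]
  exact pow_le_pow_of_le_one (norm_nonneg y) hy (by omega)

lemma bigO_of_vanish {a : E n} (hA : AnalyticAt ℝ f a) (m : ℕ)
    (h : ∀ k ≤ m, ∀ w : E n, iteratedFDeriv ℝ k f a (fun _ => w) = 0) :
    (fun y => f (a + y)) =O[𝓝 0] fun y : E n => ‖y‖ ^ (m+1) := by
  obtain ⟨p, r, hpb⟩ := hA
  have hdiag : ∀ k ≤ m, ∀ y : E n, (p k fun _ => y) = 0 := by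
    intro k hk y
    have h1 := hpb.factorial_smul y k
    rw [h k hk y] at h1
    have h2 : ((k.factorial : ℝ)) • (p k fun _ => y) = 0 := by
      rw [Nat.cast_smul_eq_nsmul, h1]
    exact (smul_eq_zero.1 h2).resolve_left (by exact_mod_cast Nat.factorial_ne_zero k)
  have hps : ∀ y : E n, p.partialSum (m+1) y = 0 := by
    intro y
    rw [FormalMultilinearSeries.partialSum]
    refine Finset.sum_eq_zero fun k hk => ?_
    exact hdiag k (Nat.lt_succ_iff.1 (Finset.mem_range.1 hk)) y
  have h3 := hpb.hasFPowerSeriesAt.isBigO_sub_partialSum_pow (m+1)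
  simpa [hps] using h3

lemma vanish_of_bigO {a : E n} (hA : AnalyticAt ℝ f a) (m : ℕ)
    (hO : (fun y => f (a + y)) =O[𝓝 0] fun y : E n => ‖y‖ ^ (m+1)) :
    ∀ k ≤ m, ∀ w : E n, iteratedFDeriv ℝ k f a (fun _ => w) = 0 := by
  obtain ⟨p, r, hpb⟩ := hA
  have key : ∀ k, k ≤ m → ∀ y : E n, (p k fun _ => y) = 0 := by
    intro k
    induction k using Nat.strong_induction_on with
    | _ k ih =>
      intro hk
      have hps : ∀ y : E n, p.partialSum (k+1) y = (p k fun _ => y) := by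
        intro y
        rw [FormalMultilinearSeries.partialSum, Finset.sum_range_succ,
          Finset.sum_eq_zero (fun i hi => ih i (Finset.mem_range.1 hi)
            (le_trans (Nat.le_of_lt (Finset.mem_range.1 hi)) hk) y), zero_add]
      have h1 := hpb.hasFPowerSeriesAt.isBigO_sub_partialSum_pow (k+1)
      have h2 : (fun y : E n => (p k fun _ => y)) =O[𝓝 0] fun y => ‖y‖^(k+1) := by
        have h3 : (fun y : E n => (p k fun _ => y))
            = fun y => (f (a+y)) - (f (a + y) - p.partialSum (k+1) y) := by
          funext y
          rw [hps y]
          ring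
        rw [h3]
        exact (hO.trans (pow_bigO k m hk)).sub h1
      exact fun y => h2.continuousMultilinearMap_apply_eq_zero y
  intro k hk w
  rw [← hpb.factorial_smul w k, key k hk w, smul_zero]

lemma ordAt_lt_iff {a : E n} (m : ℕ) :
    (m : ℕ∞) < ordAt f a ↔ ∀ α : Fin n → ℕ, (∑ j, α j) ≤ m → md α f a = 0 := by
  constructor
  · intro h α hα
    by_contra hmd
    have hmem : ((∑ j, α j : ℕ) : ℕ∞)
        ∈ {k : ℕ∞ | ∃ α : Fin n → ℕ, md α f a ≠ 0 ∧ ((∑ j, α j : ℕ) : ℕ∞) = k} :=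
      ⟨α, hmd, rfl⟩
    have h2 : ordAt f a ≤ (m : ℕ∞) :=
      le_trans (sInf_le hmem) (by exact_mod_cast hα)
    exact absurd h (not_lt.2 h2)
  · intro h
    have h1 : ((m : ℕ∞) + 1) ≤ ordAt f a := by
      apply le_sInf
      rintro b ⟨α, hmd, rfl⟩
      have h2 : ¬ (∑ j, α j) ≤ m := fun hc => hmd (h α hc)
      have h3 : m + 1 ≤ ∑ j, α j := by omega
      exact_mod_cast h3
    calc (m : ℕ∞) < (m : ℕ∞) + 1 := by
          exact_mod_cast Nat.lt_succ_self m
      _ ≤ ordAt f a := h1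

lemma le_of_forall_nat_lt {a b : ℕ∞} (h : ∀ m : ℕ, (m : ℕ∞) < a → (m : ℕ∞) < b) : a ≤ b := by
  by_contra hn
  push_neg at hn
  have hb : b ≠ ⊤ := (hn.trans_le le_top).ne
  lift b to ℕ using hb
  exact absurd (h b hn) (lt_irrefl _)

lemma ordAt_lt_iff_bigO (hV : IsOpen V) (hf : ∀ x ∈ V, AnalyticAt ℝ f x) {a : E n}
    (ha : a ∈ V) (m : ℕ) :
    (m : ℕ∞) < ordAt f a ↔ (fun y => f (a + y)) =O[𝓝 0] fun y : E n => ‖y‖ ^ (m+1) := by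
  rw [ordAt_lt_iff]
  constructor
  · intro h
    apply bigO_of_vanish (hf a ha) m
    intro k hk w
    exact diag_zero_of_md hV hf ha k (fun α hα => h α (le_trans (le_of_eq hα) hk)) w
  · intro hO α hα
    exact md_zero_of_diag hV hf ha (∑ j, α j)
      (vanish_of_bigO (hf a ha) m hO (∑ j, α j) hα) α rfl

lemma proj_analytic (j : Fin n) (y : E n) : AnalyticAt ℝ (fun z : E n => z j) y :=
  (ContinuousLinearMap.proj (R := ℝ) (φ := fun _ : Fin n => ℝ) j).analyticAt y

lemma blow_analytic (I : Finset (Fin n)) (i : Fin n) (y : E n) :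
    AnalyticAt ℝ (blowChart I i) y := by
  have : AnalyticAt ℝ (fun z => ((fun j z' => blowChart I i z' j) · z)) y := by
    apply AnalyticAt.pi
    intro j
    by_cases h : j ∈ I ∧ j ≠ i
    · have : (fun z' => blowChart I i z' j) = fun z' : E n => z' i * z' j := by
        funext z'
        simp [blowChart, h]
      rw [this]
      exact (proj_analytic i y).mul (proj_analytic j y)
    · have : (fun z' => blowChart I i z' j) = fun z' : E n => z' j := by
        funext z'
        simp [blowChart, h]
      rw [this]
      exact proj_analytic j y
  exact this

lemma diag_zero_limit {a : E n} (k : ℕ) (i : Fin n)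
    (h : ∀ w : E n, w i ≠ 0 → iteratedFDeriv ℝ k f a (fun _ => w) = 0) :
    ∀ w : E n, iteratedFDeriv ℝ k f a (fun _ => w) = 0 := by
  intro w
  by_cases hw : w i ≠ 0
  · exact h w hw
  push_neg at hw
  have hcont : Continuous (fun s : ℝ => iteratedFDeriv ℝ k f a (fun _ => w + s • ev i)) := by
    apply (iteratedFDeriv ℝ k f a).cont.comp
    apply continuous_pi
    intro _
    exact continuous_const.add (continuous_id.smul continuous_const)
  have h1 : Tendsto (fun s : ℝ => iteratedFDeriv ℝ k f a (fun _ => w + s • ev i)) (𝓝[≠] 0)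
      (𝓝 (iteratedFDeriv ℝ k f a (fun _ => w))) := by
    have h0 := hcont.tendsto 0
    simp only [zero_smul, add_zero] at h0
    exact h0.mono_left nhdsWithin_le_nhds
  have h2 : ∀ s : ℝ, s ≠ 0 → iteratedFDeriv ℝ k f a (fun _ => w + s • ev i) = 0 := by
    intro s hs
    apply h
    have : (w + s • ev i) i = s := by
      simp [ev, hw]
    rw [this]
    exact hs
  have h3 : Tendsto (fun s : ℝ => iteratedFDeriv ℝ k f a (fun _ => w + s • ev i)) (𝓝[≠] 0)
      (𝓝 0) := by
    refine Tendsto.congr' ?_ tendsto_const_nhds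
    filter_upwards [self_mem_nhdsWithin] with s hs
    exact (h2 s hs).symm
  exact tendsto_nhds_unique h1 h3

def yt (I : Finset (Fin n)) (i : Fin n) (x₀ t : E n) : E n :=
  fun j => if j ∈ I.erase i then t j else x₀ j

lemma blow_yt {I : Finset (Fin n)} {i : Fin n} (hi : i ∈ I) {x₀ : E n}
    (hx₀0 : ∀ j ∈ I, x₀ j = 0) (t : E n) : blowChart I i (yt I i x₀ t) = x₀ := by
  funext j
  by_cases h : j ∈ I ∧ j ≠ i
  · have hji : j ∈ I.erase i := Finset.mem_erase.2 ⟨h.2, h.1⟩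
    have hie : i ∉ I.erase i := Finset.notMem_erase i I
    simp only [blowChart, if_pos h, yt, if_neg hie, if_pos hji]
    rw [hx₀0 i hi, hx₀0 j h.1, zero_mul]
  · have hje : j ∉ I.erase i := fun hc =>
      h ⟨(Finset.mem_erase.1 hc).2, (Finset.mem_erase.1 hc).1⟩
    simp only [blowChart, if_neg h, yt, if_neg hje]

lemma yt_i {I : Finset (Fin n)} {i : Fin n} (hi : i ∈ I) {x₀ : E n}
    (hx₀0 : ∀ j ∈ I, x₀ j = 0) (t : E n) : yt I i x₀ t i = 0 := by
  simp only [yt, if_neg (Finset.notMem_erase i I)]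
  exact hx₀0 i hi

lemma line_id {I : Finset (Fin n)} {i : Fin n} (hi : i ∈ I) {x₀ : E n}
    (hx₀0 : ∀ j ∈ I, x₀ j = 0) (w : E n) (hwi : w i ≠ 0) (s : ℝ) :
    blowChart I i (yt I i x₀ (fun j => w j / w i)
        + s • (fun j => if j ∈ I.erase i then 0 else w j))
      = x₀ + s • w := by
  funext j
  have hie : i ∉ I.erase i := Finset.notMem_erase i I
  by_cases h : j ∈ I ∧ j ≠ i
  · have hji : j ∈ I.erase i := Finset.mem_erase.2 ⟨h.2, h.1⟩
    simp only [blowChart, if_pos h, yt, Pi.add_apply, Pi.smul_apply, smul_eq_mul,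
      if_neg hie, if_pos hji]
    rw [hx₀0 i hi, hx₀0 j h.1]
    field_simp
    ring
  · have hje : j ∉ I.erase i := fun hc =>
      h ⟨(Finset.mem_erase.1 hc).2, (Finset.mem_erase.1 hc).1⟩
    simp only [blowChart, if_neg h, yt, Pi.add_apply, Pi.smul_apply, smul_eq_mul,
      if_neg hje]

lemma K2 {U : Set (E n)} (hU : IsOpen U) (hf : ∀ x ∈ U, AnalyticAt ℝ f x)
    (I : Finset (Fin n)) (i : Fin n) (hi : i ∈ I) {x₀ : E n} (hx₀U : x₀ ∈ U)
    (hx₀0 : ∀ j ∈ I, x₀ j = 0) (d : ℕ)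
    (hlt : ∀ t : E n, (d : ℕ∞) < ordAt (fun z => f (blowChart I i z)) (yt I i x₀ t)) :
    (d : ℕ∞) < ordAt f x₀ := by
  have hπc : Continuous (blowChart I i) :=
    continuous_iff_continuousAt.2 fun y => (blow_analytic I i y).continuousAt
  have hVgo : IsOpen ((blowChart I i) ⁻¹' U) := hU.preimage hπc
  have hga : ∀ y ∈ (blowChart I i) ⁻¹' U, AnalyticAt ℝ (fun z => f (blowChart I i z)) y :=
    fun y hy => ((hf (blowChart I i y) hy).comp (blow_analytic I i y))
  rw [ordAt_lt_iff]
  intro α hα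
  apply md_zero_of_diag hU hf hx₀U (∑ j, α j) _ α rfl
  apply diag_zero_limit (∑ j, α j) i
  intro w hwi
  set k := ∑ j, α j with hk
  set t : E n := fun j => w j / w i with htdef
  set u : E n := fun j => if j ∈ I.erase i then 0 else w j with hudef
  set y0 := yt I i x₀ t with hy0def
  have hy0 : blowChart I i y0 = x₀ := blow_yt hi hx₀0 t
  have hy0V : y0 ∈ (blowChart I i) ⁻¹' U := by
    rw [Set.mem_preimage, hy0]; exact hx₀U
  have hmd := (ordAt_lt_iff d).1 (hlt t)
  have hdiagg : iteratedFDeriv ℝ k (fun z => f (blowChart I i z)) y0 (fun _ => u) = 0 :=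
    diag_zero_of_md hVgo hga hy0V k (fun γ hγ => hmd γ (le_trans (le_of_eq hγ) hα)) u
  have e1 : iteratedFDeriv ℝ k f x₀ (fun _ => w) = Dl (List.replicate k w) f x₀ := by
    rw [← Dl_ofFn hU hf k (fun _ => w) x₀ hx₀U, List.ofFn_const]
  have e2 : Dl (List.replicate k w) f x₀ = iteratedDeriv k (fun s : ℝ => f (x₀ + s • w)) 0 := by
    have h2 := iteratedDeriv_line hU hf x₀ w k 0 (by simpa using hx₀U)
    simp only [zero_smul, add_zero] at h2
    exact h2.symm
  have e3 : (fun s : ℝ => f (x₀ + s • w))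
      = fun s : ℝ => (fun z => f (blowChart I i z)) (y0 + s • u) := by
    funext s
    show f (x₀ + s • w) = f (blowChart I i ((yt I i x₀ fun j => w j / w i)
      + s • fun j => if j ∈ I.erase i then 0 else w j))
    rw [line_id hi hx₀0 w hwi s]
  have e4 : iteratedDeriv k (fun s : ℝ => (fun z => f (blowChart I i z)) (y0 + s • u)) 0
      = Dl (List.replicate k u) (fun z => f (blowChart I i z)) y0 := by
    have h4 := iteratedDeriv_line hVgo hga y0 u k 0 (by simpa using hy0V)
    simp only [zero_smul, add_zero] at h4
    exact h4
  have e5 : Dl (List.replicate k u) (fun z => f (blowChart I i z)) y0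
      = iteratedFDeriv ℝ k (fun z => f (blowChart I i z)) y0 (fun _ => u) := by
    rw [← List.ofFn_const]
    exact Dl_ofFn hVgo hga k (fun _ => u) y0 hy0V
  rw [e1, e2, e3, e4, e5]
  exact hdiagg

end S6

open S6

/-- **Order along the exceptional divisor.**  For `U ⊆ ℝⁿ` open, `I ⊆ {1,…,n}` nonempty
with `C = {x ∈ U : x_I = 0}` nonempty, `i ∈ I`, and `f` real-analytic on `U`:
`inf{ord(f∘π_i; y) : y ∈ π_i⁻¹(U), y_i = 0} = inf{ord(f;x) : x ∈ C}` in `ℕ ∪ {∞}`. -/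
theorem stmt6 {n : ℕ} (U : Set (Fin n → ℝ)) (hU : IsOpen U)
    (I : Finset (Fin n)) (hIne : I.Nonempty) (i : Fin n) (hi : i ∈ I)
    (f : (Fin n → ℝ) → ℝ) (hf : ∀ x ∈ U, AnalyticAt ℝ f x)
    (hC : {x ∈ U | ∀ j ∈ I, x j = 0}.Nonempty) :
    (⨅ y ∈ {y | blowChart I i y ∈ U ∧ y i = 0},
        ordAt (fun z => f (blowChart I i z)) y)
      = ⨅ x ∈ {x ∈ U | ∀ j ∈ I, x j = 0}, ordAt f x := by
  classical
  have hπc : Continuous (blowChart I i) :=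
    continuous_iff_continuousAt.2 fun y => (blow_analytic I i y).continuousAt
  have hVgo : IsOpen ((blowChart I i) ⁻¹' U) := hU.preimage hπc
  have hga : ∀ y ∈ (blowChart I i) ⁻¹' U, AnalyticAt ℝ (fun z => f (blowChart I i z)) y :=
    fun y hy => ((hf (blowChart I i y) hy).comp (blow_analytic I i y))
  -- membership of image in C
  have hπmem : ∀ y : Fin n → ℝ, y i = 0 → ∀ j ∈ I, blowChart I i y j = 0 := by
    intro y hyi j hj
    by_cases hji : j = i
    · subst hji
      simp only [blowChart, ne_eq, not_true_eq_false, and_false, if_false]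
      exact hyi
    · simp only [blowChart]
      rw [if_pos (show j ∈ I ∧ j ≠ i from ⟨hj, hji⟩), hyi, zero_mul]
  -- K1 : pointwise lower bound
  have K1 : ∀ y : Fin n → ℝ, blowChart I i y ∈ U →
      ordAt f (blowChart I i y) ≤ ordAt (fun z => f (blowChart I i z)) y := by
    intro y hy
    apply le_of_forall_nat_lt
    intro m hm
    rw [ordAt_lt_iff_bigO hU hf hy m] at hm
    rw [ordAt_lt_iff_bigO hVgo hga hy m]
    have hπd : DifferentiableAt ℝ (blowChart I i) y :=
      (blow_analytic I i y).differentiableAt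
    have hshift : Filter.Tendsto (fun h : Fin n → ℝ => y + h) (nhds 0) (nhds y) := by
      have h0 := (continuous_const.add continuous_id :
        Continuous fun h : Fin n → ℝ => y + h).tendsto 0
      have e : (((fun _ : Fin n → ℝ => y) + fun h => h : (Fin n → ℝ) → (Fin n → ℝ)) 0) = y := by
        rw [Pi.add_apply]; exact add_zero y
      rw [e] at h0; exact h0
    have hδO : (fun h : Fin n → ℝ => blowChart I i (y + h) - blowChart I i y)
        =O[nhds 0] (fun h : Fin n → ℝ => h) := by
      have h2 := (hπd.hasFDerivAt.isBigO_sub).comp_tendsto hshift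
      simp only [Function.comp_def] at h2
      exact h2.congr (fun _ => rfl) (fun h => by simp)
    have hδ0 : Filter.Tendsto (fun h : Fin n → ℝ => blowChart I i (y + h) - blowChart I i y)
        (nhds 0) (nhds 0) := by
      have h3 := ((hπc.tendsto y).comp hshift).sub_const (blowChart I i y)
      simpa using h3
    have hcomp := hm.comp_tendsto hδ0
    simp only [Function.comp_def] at hcomp
    have hfin : (fun h : Fin n → ℝ => f (blowChart I i (y + h)))
        =O[nhds 0] fun h : Fin n → ℝ => ‖blowChart I i (y + h) - blowChart I i y‖ ^ (m+1) :=
      hcomp.congr (fun h => by simp) (fun h => rfl)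
    have hpow : (fun h : Fin n → ℝ => ‖blowChart I i (y + h) - blowChart I i y‖ ^ (m+1))
        =O[nhds 0] fun h : Fin n → ℝ => ‖h‖ ^ (m+1) := (hδO.norm_norm).pow (m+1)
    exact hfin.trans hpow
  apply _root_.le_antisymm
  · -- hard direction
    refine le_iInf₂ fun x₀ hx₀ => ?_
    obtain ⟨hx₀U, hx₀0⟩ := hx₀
    by_cases ht : ordAt f x₀ = ⊤
    · rw [ht]; exact le_top
    obtain ⟨d, hd⟩ := WithTop.ne_top_iff_exists.1 ht
    have hnlt : ¬ ((d : ℕ∞) < ordAt f x₀) := by rw [← hd]; exact lt_irrefl _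
    have hex : ∃ t : Fin n → ℝ,
        ¬ ((d : ℕ∞) < ordAt (fun z => f (blowChart I i z)) (yt I i x₀ t)) := by
      by_contra hcon
      push_neg at hcon
      exact hnlt (K2 hU hf I i hi hx₀U hx₀0 d hcon)
    obtain ⟨t, hts⟩ := hex
    push_neg at hts
    have hmem : yt I i x₀ t ∈ {y | blowChart I i y ∈ U ∧ y i = 0} := by
      constructor
      · rw [blow_yt hi hx₀0 t]; exact hx₀U
      · exact yt_i hi hx₀0 t
    calc (⨅ y ∈ {y | blowChart I i y ∈ U ∧ y i = 0},
            ordAt (fun z => f (blowChart I i z)) y)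
        ≤ ordAt (fun z => f (blowChart I i z)) (yt I i x₀ t) := iInf₂_le _ hmem
      _ ≤ (d : ℕ∞) := hts
      _ = ordAt f x₀ := hd
  · -- easy direction
    refine le_iInf₂ fun y hy => ?_
    obtain ⟨hyU, hyi⟩ := hy
    have hmem : blowChart I i y ∈ {x ∈ U | ∀ j ∈ I, x j = 0} :=
      ⟨hyU, hπmem y hyi⟩
    calc (⨅ x ∈ {x ∈ U | ∀ j ∈ I, x j = 0}, ordAt f x)
        ≤ ordAt f (blowChart I i y) := iInf₂_le _ hmem
      _ ≤ ordAt (fun z => f (blowChart I i z)) y := K1 y hyU
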